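/- In A(T), for a ∈ G_n and any ordinal β: a ≡^β id_n if and only if the tree rank of a in the derived tree on G is at least ω·β. -/

import Mathlib

open scoped symmDiff

/-- `RankGE succ o x` means the tree rank of `x` (w.r.t. successor relation `succ`)
is at least `o`; unranked nodes (`rk = ∞`) satisfy this for every ordinal. -/
def RankGE {α : Type*} (succ : α → α → Prop) (o : Ordinal) (x : α) : Prop :=
  ∀ β < o, ∃ y, succ x y ∧ RankGE succ β y
termination_by o

/-- `T` is a subtree of `ω^{<ω}`: closed under initial segments. -/
def IsTree (T : Set (List ℕ)) : Prop := ∀ s t : List ℕ, s <+: t → t ∈ T → s ∈ T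

/-- `τ` is an immediate successor of `σ` in `T`. -/
def TSucc (T : Set (List ℕ)) (σ τ : List ℕ) : Prop := τ ∈ T ∧ ∃ k : ℕ, τ = σ ++ [k]

instance : Std.Commutative (α := Finset (List ℕ)) (· ∆ ·) := ⟨fun a b => symmDiff_comm a b⟩
instance : Std.Associative (α := Finset (List ℕ)) (· ∆ ·) := ⟨fun a b c => symmDiff_assoc a b c⟩

/-- The predecessor map: the symmetric-difference sum of the singletons of the
`T`-predecessors of the members of `a`. -/
def pmap (a : Finset (List ℕ)) : Finset (List ℕ) :=
  Finset.fold (· ∆ ·) ∅ (fun t => {t.dropLast}) a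

/-- The carrier `G = ⋃ₙ Gₙ`: an element of `Gₙ` is a pair `(n, a)` with `a` a finite
subset of the level-`n` nodes of `T`; `(n, ∅)` is the identity `idₙ` of `Gₙ`. -/
def Gset (T : Set (List ℕ)) : Set (ℕ × Finset (List ℕ)) :=
  {x | ∀ t ∈ x.2, t ∈ T ∧ t.length = x.1}

/-- The derived tree structure on `G`: `y ∈ G_{n+1}` is a successor of `x ∈ Gₙ` iff `p y = x`. -/
def Gsucc (T : Set (List ℕ)) (x y : ℕ × Finset (List ℕ)) : Prop :=
  y ∈ Gset T ∧ y.1 = x.1 + 1 ∧ pmap y.2 = x.2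

/-- The operations `f_a`: `fA a b = a* ∆ b*` where `a*`, `b*` are the iterated
predecessors of `a`, `b` down to the minimum of their levels. -/
def fA (x y : ℕ × Finset (List ℕ)) : ℕ × Finset (List ℕ) :=
  (min x.1 y.1, (pmap^[x.1 - min x.1 y.1] x.2) ∆ (pmap^[y.1 - min x.1 y.1] y.2))

/-- An automorphism of the structure `A(T) = (G, (f_a)_{a ∈ G})`: a bijection of `G`
commuting with each of the named unary operations `f_a`. -/
def IsAuto (T : Set (List ℕ)) (g : ℕ × Finset (List ℕ) → ℕ × Finset (List ℕ)) : Prop :=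
  Set.BijOn g (Gset T) (Gset T) ∧ ∀ a ∈ Gset T, ∀ b ∈ Gset T, g (fA a b) = fA a (g b)

abbrev GP := ℕ × Finset (List ℕ)

/-- Terms of the language of `A(T)`: variables and applications of the unary symbols `f_a`. -/
inductive ATerm : Type where
  | var : ℕ → ATerm
  | app : GP → ATerm → ATerm

def ATerm.eval (ρ : ℕ → GP) : ATerm → GP
  | .var i => ρ i
  | .app a t => fA a (ATerm.eval ρ t)

/-- A term is `ok` if its variables are among `x₀, …, x_{k-1}` and its symbols come from `G`. -/
def ATerm.ok (T : Set (List ℕ)) (k : ℕ) : ATerm → Prop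
  | .var i => i < k
  | .app a t => a ∈ Gset T ∧ ATerm.ok T k t

def env {k : ℕ} (a : Fin k → GP) : ℕ → GP := fun i => if h : i < k then a ⟨i, h⟩ else (0, ∅)

/-- `≡⁰`: the tuples satisfy the same quantifier-free formulas. -/
def eqQF (T : Set (List ℕ)) (k : ℕ) (a b : Fin k → GP) : Prop :=
  ∀ t₁ t₂ : ATerm, ATerm.ok T k t₁ → ATerm.ok T k t₂ →
    (ATerm.eval (env a) t₁ = ATerm.eval (env a) t₂ ↔ ATerm.eval (env b) t₁ = ATerm.eval (env b) t₂)

/-- The standard back-and-forth equivalences `≡^β` on tuples of `A(T)`. -/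
def BF (T : Set (List ℕ)) (β : Ordinal) (k : ℕ) (a b : Fin k → GP) : Prop :=
  if β = 0 then eqQF T k a b
  else ∀ γ < β,
    (∀ c ∈ Gset T, ∃ d ∈ Gset T, BF T γ (k + 1) (Fin.snoc a c) (Fin.snoc b d)) ∧
    (∀ d ∈ Gset T, ∃ c ∈ Gset T, BF T γ (k + 1) (Fin.snoc a c) (Fin.snoc b d))
termination_by β

/-- `b̄` lies in the automorphism orbit of `ā`. -/
def InOrbit (T : Set (List ℕ)) {k : ℕ} (a b : Fin k → GP) : Prop :=
  ∃ g, IsAuto T g ∧ ∀ i, g (a i) = b i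

/-- Scott rank of a tuple: the least `β` such that `≡^β`-equivalence to the tuple
implies membership in its orbit. -/
noncomputable def SR (T : Set (List ℕ)) {k : ℕ} (a : Fin k → GP) : Ordinal :=
  sInf {β : Ordinal | ∀ b : Fin k → GP, (∀ i, b i ∈ Gset T) → BF T β k a b → InOrbit T a b}


-- ===================== auxiliary lemmas =====================

section Aux

lemma pmap_empty : pmap ∅ = ∅ := rfl

lemma pmap_single (u : Finset (List ℕ)) (x : List ℕ) :
    pmap (u ∆ {x}) = pmap u ∆ {x.dropLast} := by
  by_cases hx : x ∈ u
  · have h1 : u ∆ {x} = u.erase x := by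
      ext y; simp [symmDiff, Finset.mem_erase, Finset.mem_sdiff]
      constructor
      · rintro (⟨h, h2⟩ | ⟨h, h2⟩) <;> simp_all
      · rintro ⟨h1, h2⟩; left; exact ⟨h2, h1⟩
    have h2 : pmap u = {x.dropLast} ∆ pmap (u.erase x) := by
      conv_lhs => rw [show u = insert x (u.erase x) from (Finset.insert_erase hx).symm]
      rw [pmap, Finset.fold_insert (by simp)]; rfl
    rw [h1, h2, symmDiff_comm ({x.dropLast} : Finset (List ℕ)) (pmap (u.erase x)),
      symmDiff_symmDiff_cancel_right]
  · have h1 : u ∆ {x} = insert x u := by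
      ext y; simp [symmDiff, Finset.mem_insert]
      constructor
      · rintro (⟨h, h2⟩ | ⟨h, h2⟩) <;> simp_all
      · rintro (h | h) <;> simp_all
        rintro rfl; exact hx h
    rw [h1, pmap, Finset.fold_insert hx, symmDiff_comm]
    rfl

lemma pmap_symmDiff (u v : Finset (List ℕ)) : pmap (u ∆ v) = pmap u ∆ pmap v := by
  induction v using Finset.induction_on with
  | empty =>
    simp only [pmap_empty]
    rw [show (∅ : Finset (List ℕ)) = ⊥ from rfl, symmDiff_bot, symmDiff_bot]
  | insert x s hx ih =>
    have h1 : insert x s = s ∆ {x} := by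
      ext y; simp [symmDiff, Finset.mem_insert]
      constructor
      · rintro (h | h) <;> simp_all
        rintro rfl; exact hx h
      · rintro (⟨h, h2⟩ | ⟨h, h2⟩) <;> simp_all
    rw [h1, ← symmDiff_assoc, pmap_single, pmap_single, ih, symmDiff_assoc]

lemma pmap_iter_symmDiff (j : ℕ) (u v : Finset (List ℕ)) :
    pmap^[j] (u ∆ v) = pmap^[j] u ∆ pmap^[j] v := by
  induction j generalizing u v with
  | zero => rfl
  | succ j ih => simp only [Function.iterate_succ_apply, pmap_symmDiff, ih]

lemma pmap_iter_empty (j : ℕ) : pmap^[j] (∅ : Finset (List ℕ)) = ∅ := by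
  induction j with
  | zero => rfl
  | succ j ih => simp only [Function.iterate_succ_apply, pmap_empty, ih]

lemma symmDiff_subset_union (u v : Finset (List ℕ)) : u ∆ v ⊆ u ∪ v := by
  have h := symmDiff_le_sup (a := u) (b := v)
  rwa [Finset.sup_eq_union] at h

lemma pmap_subset (u : Finset (List ℕ)) : pmap u ⊆ u.image List.dropLast := by
  induction u using Finset.induction_on with
  | empty => rw [pmap_empty]; exact Finset.empty_subset _
  | insert x s hx ih =>
    rw [pmap, Finset.fold_insert hx]
    intro y hy
    rcases Finset.mem_union.mp (Finset.mem_of_subset (symmDiff_subset_union _ _) hy) with h | h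
    · simp only [Finset.mem_singleton] at h
      subst h; simp
    · have := ih h
      simp only [Finset.mem_image] at this ⊢
      obtain ⟨t, ht, rfl⟩ := this
      exact ⟨t, by simp [ht]⟩

lemma mem_Gset {T : Set (List ℕ)} {m : ℕ} {s : Finset (List ℕ)} :
    ((m, s) : GP) ∈ Gset T ↔ ∀ t ∈ s, t ∈ T ∧ t.length = m := Iff.rfl

lemma Gset_empty (T : Set (List ℕ)) (m : ℕ) : ((m, ∅) : GP) ∈ Gset T := by
  intro t ht; simp at ht

lemma Gset_symmDiff {T : Set (List ℕ)} {m : ℕ} {u v : Finset (List ℕ)}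
    (hu : ((m, u) : GP) ∈ Gset T) (hv : ((m, v) : GP) ∈ Gset T) :
    ((m, u ∆ v) : GP) ∈ Gset T := by
  intro t ht
  rcases Finset.mem_union.mp (Finset.mem_of_subset (symmDiff_subset_union _ _) ht) with h | h
  · exact hu t h
  · exact hv t h

lemma Gset_pmap {T : Set (List ℕ)} (hT : IsTree T) {m : ℕ} {u : Finset (List ℕ)}
    (hu : ((m + 1, u) : GP) ∈ Gset T) : ((m, pmap u) : GP) ∈ Gset T := by
  intro t ht
  obtain ⟨x, hx, rfl⟩ := Finset.mem_image.mp (pmap_subset u ht)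
  obtain ⟨hxT, hxl⟩ := hu x hx
  constructor
  · exact hT _ _ (List.dropLast_prefix x) hxT
  · simp [List.length_dropLast, hxl]

lemma Gset_pmap_iter {T : Set (List ℕ)} (hT : IsTree T) (j : ℕ) {m : ℕ} {u : Finset (List ℕ)}
    (hu : ((m + j, u) : GP) ∈ Gset T) : ((m, pmap^[j] u) : GP) ∈ Gset T := by
  induction j generalizing m with
  | zero => exact hu
  | succ j ih =>
    rw [Function.iterate_succ_apply']
    have : ((m + 1 + j, u) : GP) ∈ Gset T := by
      rw [show m + 1 + j = m + (j + 1) by omega]; exact hu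
    exact Gset_pmap hT (ih this)

lemma RankGE_mono {α : Type*} {S : α → α → Prop} {o o' : Ordinal} (h : o' ≤ o) {x : α}
    (hx : RankGE S o x) : RankGE S o' x := by
  rw [RankGE] at hx ⊢
  exact fun β hβ => hx β (hβ.trans_le h)

lemma RankGE_empty (T : Set (List ℕ)) (o : Ordinal) (m : ℕ) :
    RankGE (Gsucc T) o ((m, ∅) : GP) := by
  induction o using Ordinal.induction generalizing m with
  | h o ih =>
    rw [RankGE]
    intro β hβ
    exact ⟨(m + 1, ∅), ⟨Gset_empty T (m + 1), rfl, pmap_empty⟩, ih β hβ (m + 1)⟩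

lemma RankGE_symmDiff {T : Set (List ℕ)} {o : Ordinal} {m : ℕ} {u v : Finset (List ℕ)}
    (hu : RankGE (Gsucc T) o ((m, u) : GP)) (hv : RankGE (Gsucc T) o ((m, v) : GP)) :
    RankGE (Gsucc T) o ((m, u ∆ v) : GP) := by
  induction o using Ordinal.induction generalizing m u v with
  | h o ih =>
    rw [RankGE]
    intro β hβ
    rw [RankGE] at hu hv
    obtain ⟨y, ⟨hyG, hy1, hy2⟩, hyr⟩ := hu β hβ
    obtain ⟨z, ⟨hzG, hz1, hz2⟩, hzr⟩ := hv β hβ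
    refine ⟨(m + 1, y.2 ∆ z.2), ⟨?_, rfl, ?_⟩, ?_⟩
    · exact Gset_symmDiff (by rwa [← hy1, Prod.mk.eta]) (by rwa [← hz1, Prod.mk.eta])
    · rw [pmap_symmDiff, hy2, hz2]
    · have hy' : RankGE (Gsucc T) β ((m + 1, y.2) : GP) := by rwa [← hy1, Prod.mk.eta]
      have hz' : RankGE (Gsucc T) β ((m + 1, z.2) : GP) := by rwa [← hz1, Prod.mk.eta]
      exact ih β hβ hy' hz'

lemma RankGE_pmap {T : Set (List ℕ)} {o : Ordinal} {m : ℕ} {u : Finset (List ℕ)}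
    (hG : ((m + 1, u) : GP) ∈ Gset T)
    (h : RankGE (Gsucc T) o ((m + 1, u) : GP)) :
    RankGE (Gsucc T) (o + 1) ((m, pmap u) : GP) := by
  rw [RankGE]
  intro β hβ
  have hβ' : β ≤ o := Order.lt_add_one_iff.mp hβ
  exact ⟨(m + 1, u), ⟨hG, rfl, rfl⟩, RankGE_mono hβ' h⟩

lemma RankGE_pmap_iter {T : Set (List ℕ)} (hT : IsTree T) (j : ℕ) {o : Ordinal} {m : ℕ}
    {u : Finset (List ℕ)} (hG : ((m + j, u) : GP) ∈ Gset T)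
    (h : RankGE (Gsucc T) o ((m + j, u) : GP)) :
    RankGE (Gsucc T) (o + j) ((m, pmap^[j] u) : GP) := by
  induction j generalizing m with
  | zero => simpa using h
  | succ j ih =>
    have hshift : m + (j + 1) = m + 1 + j := by omega
    have hG' : ((m + 1 + j, u) : GP) ∈ Gset T := by rw [← hshift]; exact hG
    have h' : RankGE (Gsucc T) o ((m + 1 + j, u) : GP) := by rw [← hshift]; exact h
    have step := RankGE_pmap (Gset_pmap_iter hT j hG') (ih hG' h')
    rw [Function.iterate_succ_apply']
    have : ((j : Ordinal) + 1) = ((j + 1 : ℕ) : Ordinal) := by push_cast [Nat.cast_add]; rfl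
    rw [show o + ((j + 1 : ℕ) : Ordinal) = o + j + 1 by rw [← this, add_assoc]]
    exact step

lemma RankGE_chain {T : Set (List ℕ)} (l : ℕ) {o : Ordinal} {m : ℕ} {s : Finset (List ℕ)}
    (hG : ((m, s) : GP) ∈ Gset T)
    (h : RankGE (Gsucc T) (o + l) ((m, s) : GP)) :
    ∃ u : Finset (List ℕ), ((m + l, u) : GP) ∈ Gset T ∧ pmap^[l] u = s ∧
      RankGE (Gsucc T) o ((m + l, u) : GP) := by
  induction l generalizing m s with
  | zero => exact ⟨s, by simpa using hG, rfl, by simpa using h⟩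
  | succ l ih =>
    rw [RankGE] at h
    have hlt : o + (l : Ordinal) < o + ((l + 1 : ℕ) : Ordinal) := by
      apply add_lt_add_right; exact_mod_cast Nat.lt_succ_self l
    obtain ⟨y, ⟨hyG, hy1, hy2⟩, hyr⟩ := h (o + l) hlt
    have hyG' : ((m + 1, y.2) : GP) ∈ Gset T := by rwa [← hy1, Prod.mk.eta]
    have hyr' : RankGE (Gsucc T) (o + l) ((m + 1, y.2) : GP) := by rwa [← hy1, Prod.mk.eta]
    obtain ⟨u, huG, hup, hur⟩ := ih hyG' hyr'
    refine ⟨u, ?_, ?_, ?_⟩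
    · rwa [show m + 1 + l = m + (l + 1) by omega] at huG
    · rw [Function.iterate_succ_apply', hup, hy2]
    · rwa [show m + 1 + l = m + (l + 1) by omega] at hur

lemma RankGE_omega_mul {α : Type*} {S : α → α → Prop} {γ : Ordinal} {x : α}
    (h : ∀ γ' < γ, ∀ j : ℕ, RankGE S (Ordinal.omega0 * γ' + j) x) :
    RankGE S (Ordinal.omega0 * γ) x := by
  rw [RankGE]
  intro o ho
  have hω : (Ordinal.omega0 : Ordinal) ≠ 0 := Ordinal.omega0_ne_zero
  have hq : o / Ordinal.omega0 < γ := by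
    rwa [Ordinal.div_lt hω]
  have hr : o % Ordinal.omega0 < Ordinal.omega0 := Ordinal.mod_lt o hω
  obtain ⟨j, hj⟩ := Ordinal.lt_omega0.mp hr
  have hdm : Ordinal.omega0 * (o / Ordinal.omega0) + (j : Ordinal) = o := by
    rw [← hj]; exact Ordinal.div_add_mod o Ordinal.omega0
  have := h (o / Ordinal.omega0) hq (j + 1)
  rw [RankGE] at this
  apply this
  conv_lhs => rw [← hdm]
  apply add_lt_add_right
  exact_mod_cast Nat.lt_succ_self j

lemma omega_mul_add_nat_le {γ β : Ordinal} (h : γ < β) (l : ℕ) :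
    Ordinal.omega0 * γ + l ≤ Ordinal.omega0 * β := by
  have h1 : Ordinal.omega0 * γ + l < Ordinal.omega0 * γ + Ordinal.omega0 :=
    add_lt_add_right (Ordinal.nat_lt_omega0 l) _
  have h2 : Ordinal.omega0 * γ + Ordinal.omega0 = Ordinal.omega0 * (γ + 1) := by
    rw [mul_add, mul_one]
  have h3 : Ordinal.omega0 * (γ + 1) ≤ Ordinal.omega0 * β := by
    exact mul_le_mul_right (Order.add_one_le_iff.mpr h) _
  exact le_trans (le_of_lt (h1.trans_le (le_of_eq h2))) h3

end Aux


-- ===================== term canonical forms and eqQF =====================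

section Terms

lemma ok_mono {T : Set (List ℕ)} {k : ℕ} {t : ATerm} (h : ATerm.ok T k t) :
    ATerm.ok T (k + 1) t := by
  induction t with
  | var i => exact Nat.lt_succ_of_lt h
  | app u t ih => exact ⟨h.1, ih h.2⟩

lemma env_fin {k : ℕ} (a : Fin k → GP) (i : Fin k) : env a ↑i = a i := by
  simp only [env, i.isLt, dif_pos, Fin.eta]

lemma eval_env_snoc {k : ℕ} (a : Fin k → GP) (c : GP) {T : Set (List ℕ)} (t : ATerm)
    (hok : ATerm.ok T k t) :
    ATerm.eval (env (Fin.snoc a c)) t = ATerm.eval (env a) t := by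
  induction t with
  | var i =>
    have hik : i < k := hok
    have hik1 : i < k + 1 := Nat.lt_succ_of_lt hik
    show env (Fin.snoc a c) i = env a i
    rw [env, env, dif_pos hik, dif_pos hik1]
    have : (⟨i, hik1⟩ : Fin (k + 1)) = Fin.castSucc ⟨i, hik⟩ := rfl
    rw [this, Fin.snoc_castSucc]
  | app u t ih =>
    show fA u _ = fA u _
    rw [ih hok.2]

lemma eqQF_restrict {T : Set (List ℕ)} {k : ℕ} {a b : Fin k → GP} {c d : GP}
    (h : eqQF T (k + 1) (Fin.snoc a c) (Fin.snoc b d)) : eqQF T k a b := by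
  intro t1 t2 h1 h2
  have := h t1 t2 (ok_mono h1) (ok_mono h2)
  rwa [eval_env_snoc a c t1 h1, eval_env_snoc a c t2 h2, eval_env_snoc b d t1 h1,
    eval_env_snoc b d t2 h2] at this

lemma eqQF_symm {T : Set (List ℕ)} {k : ℕ} {a b : Fin k → GP}
    (h : eqQF T k a b) : eqQF T k b a :=
  fun t1 t2 h1 h2 => (h t1 t2 h1 h2).symm

lemma symmDiff_move (u v w z : Finset (List ℕ)) : u ∆ v = w ∆ z ↔ u ∆ w = v ∆ z := by
  constructor <;> intro h <;> ext x <;> have hx := Finset.ext_iff.mp h x <;>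
    simp only [Finset.mem_symmDiff] at hx ⊢ <;> tauto

lemma pmap_iter_comp (p q r : ℕ) (h : p + q = r) (x : Finset (List ℕ)) :
    pmap^[p] (pmap^[q] x) = pmap^[r] x := by
  rw [← Function.iterate_add_apply, h]

lemma eval_app_const {k : ℕ} (c : Fin k → GP) (i : Fin k) (p : ℕ) (s : Finset (List ℕ))
    (hp : p ≤ (c i).1) :
    ATerm.eval (env c) (ATerm.app (p, s) (ATerm.var ↑i)) =
      ((p, s ∆ pmap^[(c i).1 - p] (c i).2) : GP) := by
  show fA (p, s) (env c ↑i) = _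
  rw [env_fin, fA]
  have h1 : min (p, s).1 (c i).1 = p := by simp only []; omega
  rw [h1]
  simp only [Nat.sub_self, Function.iterate_zero, id_eq]

/-- canonical form of term evaluation -/
lemma eval_canon {T : Set (List ℕ)} {k : ℕ} {a b : Fin k → GP}
    (hlev : ∀ i, (b i).1 = (a i).1) (t : ATerm) (hok : ATerm.ok T k t) :
    ∃ (i : Fin k) (m : ℕ) (C : Finset (List ℕ)), m ≤ (a i).1 ∧
      ATerm.eval (env a) t = (m, C ∆ pmap^[(a i).1 - m] (a i).2) ∧
      ATerm.eval (env b) t = (m, C ∆ pmap^[(a i).1 - m] (b i).2) := by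
  induction t with
  | var i0 =>
    have hik : i0 < k := hok
    refine ⟨⟨i0, hik⟩, (a ⟨i0, hik⟩).1, ∅, le_rfl, ?_, ?_⟩
    · show env a i0 = _
      rw [env, dif_pos hik]
      simp only [Nat.sub_self, Function.iterate_zero, id_eq]
      rw [show (∅ : Finset (List ℕ)) = ⊥ from rfl, bot_symmDiff]
    · show env b i0 = _
      rw [env, dif_pos hik]
      simp only [Nat.sub_self, Function.iterate_zero, id_eq]
      rw [show (∅ : Finset (List ℕ)) = ⊥ from rfl, bot_symmDiff]
      rw [← hlev ⟨i0, hik⟩]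
  | app u t ih =>
    obtain ⟨i, m, C, hm, hA, hB⟩ := ih hok.2
    refine ⟨i, min u.1 m, pmap^[u.1 - min u.1 m] u.2 ∆ pmap^[m - min u.1 m] C,
      le_trans (min_le_right _ _) hm, ?_, ?_⟩
    · show fA u (ATerm.eval (env a) t) = _
      rw [hA, fA]
      simp only []
      refine congrArg (Prod.mk _) ?_
      rw [pmap_iter_symmDiff, symmDiff_assoc,
        pmap_iter_comp (m - min u.1 m) ((a i).1 - m) ((a i).1 - min u.1 m) (by omega)]
    · show fA u (ATerm.eval (env b) t) = _
      rw [hB, fA]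
      simp only []
      refine congrArg (Prod.mk _) ?_
      rw [pmap_iter_symmDiff, symmDiff_assoc,
        pmap_iter_comp (m - min u.1 m) ((a i).1 - m) ((a i).1 - min u.1 m) (by omega)]

lemma eqQF_levels {T : Set (List ℕ)} {k : ℕ} {a b : Fin k → GP}
    (h : eqQF T k a b) (i : Fin k) : (b i).1 = (a i).1 := by
  have key : ∀ (c d : Fin k → GP), eqQF T k c d → (d i).1 ≤ (c i).1 := by
    intro c d hcd
    by_contra hgt
    push_neg at hgt
    set p := (c i).1 with hp
    have h1 := hcd (ATerm.app (p, ∅) (ATerm.var ↑i)) (ATerm.app (p + 1, ∅) (ATerm.var ↑i))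
      ⟨Gset_empty T p, i.isLt⟩ ⟨Gset_empty T (p + 1), i.isLt⟩
    have e1 : ATerm.eval (env c) (ATerm.app (p, ∅) (ATerm.var ↑i)) =
        ATerm.eval (env c) (ATerm.app (p + 1, ∅) (ATerm.var ↑i)) := by
      show fA (p, ∅) (env c ↑i) = fA (p + 1, ∅) (env c ↑i)
      rw [env_fin, fA, fA]
      simp only [pmap_iter_empty]
      rw [show (∅ : Finset (List ℕ)) = ⊥ from rfl, bot_symmDiff, bot_symmDiff]
      have m1 : min (p, (∅ : Finset (List ℕ))).1 (c i).1 = p := by simp only []; omega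
      have m2 : min (p + 1, (∅ : Finset (List ℕ))).1 (c i).1 = p := by simp only []; omega
      rw [m1, m2]
    have e2 := h1.mp e1
    have := congrArg Prod.fst e2
    simp only [ATerm.eval, env_fin, fA] at this
    omega
  exact le_antisymm (key a b h) (key b a (eqQF_symm h))

lemma eqQF_pairs {T : Set (List ℕ)} (hT : IsTree T) {k : ℕ} {a b : Fin k → GP}
    (haG : ∀ i, a i ∈ Gset T) (h : eqQF T k a b) (i j : Fin k) :
    pmap^[(a i).1 - min (a i).1 (a j).1] (a i).2 ∆ pmap^[(a j).1 - min (a i).1 (a j).1] (a j).2 =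
    pmap^[(a i).1 - min (a i).1 (a j).1] (b i).2 ∆ pmap^[(a j).1 - min (a i).1 (a j).1] (b j).2 := by
  have hlev := eqQF_levels h
  set m := min (a i).1 (a j).1 with hm
  set s := pmap^[(a i).1 - m] (a i).2 ∆ pmap^[(a j).1 - m] (a j).2 with hs
  have hmi : m ≤ (a i).1 := min_le_left _ _
  have hmj : m ≤ (a j).1 := min_le_right _ _
  have hsG : ((m, s) : GP) ∈ Gset T := by
    apply Gset_symmDiff
    · apply Gset_pmap_iter hT
      rw [show m + ((a i).1 - m) = (a i).1 by omega, Prod.mk.eta]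
      exact haG i
    · apply Gset_pmap_iter hT
      rw [show m + ((a j).1 - m) = (a j).1 by omega, Prod.mk.eta]
      exact haG j
  have h1 := h (ATerm.app (m, s) (ATerm.var ↑j)) (ATerm.app (m, ∅) (ATerm.var ↑i))
    ⟨hsG, j.isLt⟩ ⟨Gset_empty T m, i.isLt⟩
  have e1 : ATerm.eval (env a) (ATerm.app (m, s) (ATerm.var ↑j)) =
      ATerm.eval (env a) (ATerm.app (m, ∅) (ATerm.var ↑i)) := by
    rw [eval_app_const a j m s hmj, eval_app_const a i m ∅ hmi]
    rw [show (∅ : Finset (List ℕ)) = ⊥ from rfl, bot_symmDiff, hs,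
      symmDiff_symmDiff_cancel_right]
  have e2 := h1.mp e1
  rw [eval_app_const b j m s (by rw [hlev j]; exact hmj),
    eval_app_const b i m ∅ (by rw [hlev i]; exact hmi)] at e2
  rw [show (∅ : Finset (List ℕ)) = ⊥ from rfl, bot_symmDiff] at e2
  have e3 : s ∆ pmap^[(b j).1 - m] (b j).2 = pmap^[(b i).1 - m] (b i).2 :=
    congrArg Prod.snd e2
  rw [hlev i, hlev j] at e3
  rw [← e3, symmDiff_symmDiff_cancel_right]

lemma pairs_to_eqQF {T : Set (List ℕ)} {k : ℕ} {a b : Fin k → GP}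
    (hlev : ∀ i, (b i).1 = (a i).1)
    (hpairs : ∀ i j : Fin k,
      pmap^[(a i).1 - min (a i).1 (a j).1] (a i).2 ∆
        pmap^[(a j).1 - min (a i).1 (a j).1] (a j).2 =
      pmap^[(a i).1 - min (a i).1 (a j).1] (b i).2 ∆
        pmap^[(a j).1 - min (a i).1 (a j).1] (b j).2) :
    eqQF T k a b := by
  intro t1 t2 h1 h2
  obtain ⟨i1, m1, C1, hm1, hA1, hB1⟩ := eval_canon hlev t1 h1
  obtain ⟨i2, m2, C2, hm2, hA2, hB2⟩ := eval_canon hlev t2 h2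
  rw [hA1, hA2, hB1, hB2]
  by_cases hm : m1 = m2
  · subst hm
    simp only [Prod.mk.injEq, true_and]
    have hm1μ : m1 ≤ min (a i1).1 (a i2).1 := le_min hm1 hm2
    have key : pmap^[(a i1).1 - m1] (a i1).2 ∆ pmap^[(a i2).1 - m1] (a i2).2 =
        pmap^[(a i1).1 - m1] (b i1).2 ∆ pmap^[(a i2).1 - m1] (b i2).2 := by
      have hp := congrArg (pmap^[min (a i1).1 (a i2).1 - m1]) (hpairs i1 i2)
      rw [pmap_iter_symmDiff, pmap_iter_symmDiff,
        pmap_iter_comp (min (a i1).1 (a i2).1 - m1) ((a i1).1 - min (a i1).1 (a i2).1)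
          ((a i1).1 - m1) (by omega) ((a i1).2),
        pmap_iter_comp (min (a i1).1 (a i2).1 - m1) ((a i1).1 - min (a i1).1 (a i2).1)
          ((a i1).1 - m1) (by omega) ((b i1).2),
        pmap_iter_comp (min (a i1).1 (a i2).1 - m1) ((a i2).1 - min (a i1).1 (a i2).1)
          ((a i2).1 - m1) (by omega) ((a i2).2),
        pmap_iter_comp (min (a i1).1 (a i2).1 - m1) ((a i2).1 - min (a i1).1 (a i2).1)
          ((a i2).1 - m1) (by omega) ((b i2).2)] at hp
      exact hp
    rw [symmDiff_move, symmDiff_move C1 (pmap^[(a i1).1 - m1] (b i1).2)]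
    rw [key]
  · simp only [Prod.mk.injEq]
    constructor
    · rintro ⟨h, -⟩; exact absurd h hm
    · rintro ⟨h, -⟩; exact absurd h hm

end Terms

/-- The invariant characterizing `≡^β`. -/
def BFInv (T : Set (List ℕ)) (β : Ordinal) {k : ℕ} (a b : Fin k → GP) : Prop :=
  (∀ i, (b i).1 = (a i).1) ∧
  (∀ i j : Fin k,
    pmap^[(a i).1 - min (a i).1 (a j).1] (a i).2 ∆ pmap^[(a j).1 - min (a i).1 (a j).1] (a j).2 =
    pmap^[(a i).1 - min (a i).1 (a j).1] (b i).2 ∆ pmap^[(a j).1 - min (a i).1 (a j).1] (b j).2) ∧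
  (∀ i, RankGE (Gsucc T) (Ordinal.omega0 * β) (((a i).1, (a i).2 ∆ (b i).2) : GP))

lemma BFInv_symm {T : Set (List ℕ)} {β : Ordinal} {k : ℕ} {a b : Fin k → GP}
    (h : BFInv T β a b) : BFInv T β b a := by
  obtain ⟨hl, he, hr⟩ := h
  refine ⟨fun i => (hl i).symm, fun i j => ?_, fun i => ?_⟩
  · rw [hl i, hl j]; exact (he i j).symm
  · rw [hl i, symmDiff_comm]; exact hr i


-- ===================== BF lemmas =====================

lemma BF_zero {T : Set (List ℕ)} {k : ℕ} {a b : Fin k → GP} :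
    BF T 0 k a b ↔ eqQF T k a b := by
  rw [BF]; simp

lemma BF_ne {T : Set (List ℕ)} {β : Ordinal} (hβ : β ≠ 0) {k : ℕ} {a b : Fin k → GP} :
    BF T β k a b ↔ ∀ γ < β,
      (∀ c ∈ Gset T, ∃ d ∈ Gset T, BF T γ (k + 1) (Fin.snoc a c) (Fin.snoc b d)) ∧
      (∀ d ∈ Gset T, ∃ c ∈ Gset T, BF T γ (k + 1) (Fin.snoc a c) (Fin.snoc b d)) := by
  rw [BF]; simp [hβ]

lemma snoc_Gset {T : Set (List ℕ)} {k : ℕ} {a : Fin k → GP} {c : GP}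
    (haG : ∀ i, a i ∈ Gset T) (hc : c ∈ Gset T) :
    ∀ i, (Fin.snoc a c : Fin (k + 1) → GP) i ∈ Gset T := by
  intro i
  induction i using Fin.lastCases with
  | last => simpa [Fin.snoc_last] using hc
  | cast i => simpa [Fin.snoc_castSucc] using haG i

lemma BF_to_eqQF {T : Set (List ℕ)} {β : Ordinal} {k : ℕ} {a b : Fin k → GP}
    (h : BF T β k a b) : eqQF T k a b := by
  by_cases hβ : β = 0
  · subst hβ; exact BF_zero.mp h
  · rw [BF_ne hβ] at h
    obtain ⟨h1, -⟩ := h 0 (pos_iff_ne_zero.mpr hβ)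
    obtain ⟨d, hd, hBF0⟩ := h1 ((0, ∅) : GP) (Gset_empty T 0)
    exact eqQF_restrict (BF_zero.mp hBF0)

-- ===================== forward direction =====================

theorem BF_to_BFInv {T : Set (List ℕ)} (hT : IsTree T) :
    ∀ β : Ordinal, ∀ (k : ℕ) (a b : Fin k → GP), (∀ i, a i ∈ Gset T) → (∀ i, b i ∈ Gset T) →
      BF T β k a b → BFInv T β a b := by
  intro β
  induction β using Ordinal.induction with
  | h β ih =>
    intro k a b haG hbG hBF
    have hqf := BF_to_eqQF hBF
    have hlev := eqQF_levels hqf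
    refine ⟨hlev, eqQF_pairs hT haG hqf, ?_⟩
    intro i
    apply RankGE_omega_mul
    intro γ hγ j
    have hβ0 : β ≠ 0 := fun h0 => by subst h0; exact absurd hγ (not_lt_zero)
    rw [BF_ne hβ0] at hBF
    obtain ⟨h1, -⟩ := hBF γ hγ
    obtain ⟨d, hdG, hBFγ⟩ := h1 (((a i).1 + j, ∅) : GP) (Gset_empty T _)
    have hInvγ := ih γ hγ (k + 1) _ _ (snoc_Gset haG (Gset_empty T _)) (snoc_Gset hbG hdG) hBFγ
    obtain ⟨hl', he', hr'⟩ := hInvγ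
    have hd1 : d.1 = (a i).1 + j := by
      have := hl' (Fin.last k)
      simpa [Fin.snoc_last] using this
    have hpair := he' (Fin.castSucc i) (Fin.last k)
    simp only [Fin.snoc_castSucc, Fin.snoc_last] at hpair
    rw [show min (a i).1 (((a i).1 + j, (∅ : Finset (List ℕ))).1) = (a i).1 by
        simp only []; omega] at hpair
    simp only [Nat.sub_self, Function.iterate_zero, id_eq, Nat.add_sub_cancel_left,
      pmap_iter_empty] at hpair
    rw [show (∅ : Finset (List ℕ)) = ⊥ from rfl, symmDiff_bot] at hpair
    -- hpair : (a i).2 = (b i).2 ∆ pmap^[j] d.2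
    have hεd : pmap^[j] d.2 = (a i).2 ∆ (b i).2 := by
      rw [symmDiff_comm]
      rw [hpair, symmDiff_symmDiff_cancel_left]
    have hrlast0 := hr' (Fin.last k)
    simp only [Fin.snoc_last] at hrlast0
    have hrlast : RankGE (Gsucc T) (Ordinal.omega0 * γ)
        (((a i).1 + j, (⊥ : Finset (List ℕ)) ∆ d.2) : GP) := hrlast0
    rw [bot_symmDiff] at hrlast
    have hdG' : (((a i).1 + j, d.2) : GP) ∈ Gset T := by
      rw [← hd1, Prod.mk.eta]; exact hdG
    have := RankGE_pmap_iter hT j hdG' hrlast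
    rwa [hεd] at this

-- ===================== extension construction =====================

lemma gba1 {α : Type*} [GeneralizedBooleanAlgebra α] (A B C : α) :
    B ∆ (C ∆ (A ∆ B)) = A ∆ C := by
  rw [symmDiff_left_comm, symmDiff_comm A B, symmDiff_symmDiff_cancel_left, symmDiff_comm]

lemma gba2 {α : Type*} [GeneralizedBooleanAlgebra α] (A B C : α) :
    C ∆ (A ∆ B) ∆ B = C ∆ A := by
  rw [symmDiff_assoc, symmDiff_symmDiff_cancel_right]

lemma pair_new (nc na : ℕ) (cs εs ai bi : Finset (List ℕ))
    (hεp : pmap^[nc - min na nc] εs = pmap^[na - min na nc] (ai ∆ bi)) :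
    pmap^[na - min na nc] ai ∆ pmap^[nc - min na nc] cs =
      pmap^[na - min na nc] bi ∆ pmap^[nc - min na nc] (cs ∆ εs) := by
  rw [pmap_iter_symmDiff (nc - min na nc) cs εs, hεp,
    pmap_iter_symmDiff (na - min na nc) ai bi]
  exact (gba1 _ _ _).symm

lemma pair_new' (nc na : ℕ) (cs εs ai bi : Finset (List ℕ))
    (hεp : pmap^[nc - min na nc] εs = pmap^[na - min na nc] (ai ∆ bi)) :
    pmap^[nc - min nc na] cs ∆ pmap^[na - min nc na] ai =
      pmap^[nc - min nc na] (cs ∆ εs) ∆ pmap^[na - min nc na] bi := by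
  rw [min_comm nc na, pmap_iter_symmDiff (nc - min na nc) cs εs, hεp,
    pmap_iter_symmDiff (na - min na nc) ai bi]
  rw [gba2]

lemma ext_construct {T : Set (List ℕ)} (hT : IsTree T) {β γ : Ordinal} (hγβ : γ < β) {k : ℕ}
    {a b : Fin k → GP} (haG : ∀ i, a i ∈ Gset T) (hbG : ∀ i, b i ∈ Gset T)
    (hInv : BFInv T β a b) (c : GP) (hc : c ∈ Gset T) :
    ∃ d ∈ Gset T, BFInv T γ (Fin.snoc a c) (Fin.snoc b d) := by
  obtain ⟨hl, he, hr⟩ := hInv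
  have hε : ∃ ε : Finset (List ℕ), ((c.1, ε) : GP) ∈ Gset T ∧
      RankGE (Gsucc T) (Ordinal.omega0 * γ) ((c.1, ε) : GP) ∧
      ∀ i : Fin k, pmap^[c.1 - min (a i).1 c.1] ε =
        pmap^[(a i).1 - min (a i).1 c.1] ((a i).2 ∆ (b i).2) := by
    rcases Nat.eq_zero_or_pos k with hk | hk
    · refine ⟨∅, Gset_empty T c.1, RankGE_empty T _ c.1, fun i => ?_⟩
      exact absurd i.isLt (by omega)
    · have hne : Nonempty (Fin k) := ⟨⟨0, hk⟩⟩
      obtain ⟨i0, hi0⟩ := Finite.exists_max (fun i : Fin k => min (a i).1 c.1)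
      have hm0n : min (a i0).1 c.1 ≤ (a i0).1 := min_le_left _ _
      have hm0c : min (a i0).1 c.1 ≤ c.1 := min_le_right _ _
      -- base
      have hbG0 : (((a i0).1, (a i0).2 ∆ (b i0).2) : GP) ∈ Gset T := by
        apply Gset_symmDiff
        · rw [Prod.mk.eta]; exact haG i0
        · rw [← hl i0, Prod.mk.eta]
          exact hbG i0
      have hGb : ((min (a i0).1 c.1 + ((a i0).1 - min (a i0).1 c.1),
          (a i0).2 ∆ (b i0).2) : GP) ∈ Gset T := by
        rw [show min (a i0).1 c.1 + ((a i0).1 - min (a i0).1 c.1) = (a i0).1 by omega]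
        exact hbG0
      have hRb : RankGE (Gsucc T) (Ordinal.omega0 * β)
          ((min (a i0).1 c.1 + ((a i0).1 - min (a i0).1 c.1), (a i0).2 ∆ (b i0).2) : GP) := by
        rw [show min (a i0).1 c.1 + ((a i0).1 - min (a i0).1 c.1) = (a i0).1 by omega]
        exact hr i0
      have hproj := RankGE_pmap_iter hT ((a i0).1 - min (a i0).1 c.1) hGb hRb
      have hGbase : ((min (a i0).1 c.1,
          pmap^[(a i0).1 - min (a i0).1 c.1] ((a i0).2 ∆ (b i0).2)) : GP) ∈ Gset T :=
        Gset_pmap_iter hT _ hGb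
      have hRbase : RankGE (Gsucc T)
          (Ordinal.omega0 * γ + ((c.1 - min (a i0).1 c.1 : ℕ) : Ordinal))
          ((min (a i0).1 c.1,
            pmap^[(a i0).1 - min (a i0).1 c.1] ((a i0).2 ∆ (b i0).2)) : GP) := by
        refine RankGE_mono ?_ hproj
        exact le_trans (omega_mul_add_nat_le hγβ _) le_self_add
      obtain ⟨ε, hεG, hεp, hεr⟩ := RankGE_chain (c.1 - min (a i0).1 c.1) hGbase hRbase
      have hlev_eq : min (a i0).1 c.1 + (c.1 - min (a i0).1 c.1) = c.1 := by omega
      rw [hlev_eq] at hεG hεr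
      refine ⟨ε, hεG, hεr, ?_⟩
      intro i
      have hmi0 : min (a i).1 c.1 ≤ min (a i0).1 c.1 := hi0 i
      have hmii : min (a i).1 c.1 ≤ (a i).1 := min_le_left _ _
      have hmic : min (a i).1 c.1 ≤ c.1 := min_le_right _ _
      -- pairwise relation between δ_i and δ_i0
      have hμi : min (a i).1 (a i0).1 ≤ (a i).1 := min_le_left _ _
      have hμi0 : min (a i).1 (a i0).1 ≤ (a i0).1 := min_le_right _ _
      have hmiμ : min (a i).1 c.1 ≤ min (a i).1 (a i0).1 := by
        apply le_min hmii
        exact le_trans hmi0 hm0n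
      have hdel : pmap^[(a i).1 - min (a i).1 (a i0).1] ((a i).2 ∆ (b i).2) =
          pmap^[(a i0).1 - min (a i).1 (a i0).1] ((a i0).2 ∆ (b i0).2) := by
        rw [pmap_iter_symmDiff, pmap_iter_symmDiff]
        exact (symmDiff_move _ _ _ _).mp (he i i0)
      calc pmap^[c.1 - min (a i).1 c.1] ε
          = pmap^[min (a i0).1 c.1 - min (a i).1 c.1]
              (pmap^[c.1 - min (a i0).1 c.1] ε) := by
            rw [pmap_iter_comp (min (a i0).1 c.1 - min (a i).1 c.1)
              (c.1 - min (a i0).1 c.1) (c.1 - min (a i).1 c.1) (by omega) ε]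
        _ = pmap^[min (a i0).1 c.1 - min (a i).1 c.1]
              (pmap^[(a i0).1 - min (a i0).1 c.1] ((a i0).2 ∆ (b i0).2)) := by rw [hεp]
        _ = pmap^[(a i0).1 - min (a i).1 c.1] ((a i0).2 ∆ (b i0).2) := by
            rw [pmap_iter_comp (min (a i0).1 c.1 - min (a i).1 c.1)
              ((a i0).1 - min (a i0).1 c.1) ((a i0).1 - min (a i).1 c.1) (by omega)
              ((a i0).2 ∆ (b i0).2)]
        _ = pmap^[min (a i).1 (a i0).1 - min (a i).1 c.1]
              (pmap^[(a i0).1 - min (a i).1 (a i0).1] ((a i0).2 ∆ (b i0).2)) := by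
            rw [pmap_iter_comp (min (a i).1 (a i0).1 - min (a i).1 c.1)
              ((a i0).1 - min (a i).1 (a i0).1) ((a i0).1 - min (a i).1 c.1) (by omega)
              ((a i0).2 ∆ (b i0).2)]
        _ = pmap^[min (a i).1 (a i0).1 - min (a i).1 c.1]
              (pmap^[(a i).1 - min (a i).1 (a i0).1] ((a i).2 ∆ (b i).2)) := by rw [hdel]
        _ = pmap^[(a i).1 - min (a i).1 c.1] ((a i).2 ∆ (b i).2) := by
            rw [pmap_iter_comp (min (a i).1 (a i0).1 - min (a i).1 c.1)
              ((a i).1 - min (a i).1 (a i0).1) ((a i).1 - min (a i).1 c.1) (by omega)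
              ((a i).2 ∆ (b i).2)]
  obtain ⟨ε, hεG, hεr, hεp⟩ := hε
  have hcG' : ((c.1, c.2) : GP) ∈ Gset T := by rw [Prod.mk.eta]; exact hc
  refine ⟨(c.1, c.2 ∆ ε), Gset_symmDiff hcG' hεG, ?_, ?_, ?_⟩
  · intro i
    induction i using Fin.lastCases with
    | last => simp [Fin.snoc_last]
    | cast i => simp only [Fin.snoc_castSucc]; exact hl i
  · intro i j
    induction i using Fin.lastCases with
    | last =>
      induction j using Fin.lastCases with
      | last =>
        simp only [Fin.snoc_last]
        rw [symmDiff_self, symmDiff_self]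
      | cast j =>
        simp only [Fin.snoc_last, Fin.snoc_castSucc]
        exact pair_new' c.1 (a j).1 c.2 ε (a j).2 (b j).2 (hεp j)
    | cast i =>
      induction j using Fin.lastCases with
      | last =>
        simp only [Fin.snoc_last, Fin.snoc_castSucc]
        exact pair_new c.1 (a i).1 c.2 ε (a i).2 (b i).2 (hεp i)
      | cast j =>
        simp only [Fin.snoc_castSucc]
        exact he i j
  · intro i
    induction i using Fin.lastCases with
    | last =>
      simp only [Fin.snoc_last]
      have goal' : RankGE (Gsucc T) (Ordinal.omega0 * γ)
          ((c.1, c.2 ∆ (c.2 ∆ ε)) : GP) := by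
        rw [symmDiff_symmDiff_cancel_left]
        exact hεr
      exact goal'
    | cast i =>
      simp only [Fin.snoc_castSucc]
      exact RankGE_mono (mul_le_mul_right hγβ.le _) (hr i)

-- ===================== backward direction =====================

theorem BFInv_to_BF {T : Set (List ℕ)} (hT : IsTree T) :
    ∀ β : Ordinal, ∀ (k : ℕ) (a b : Fin k → GP), (∀ i, a i ∈ Gset T) → (∀ i, b i ∈ Gset T) →
      BFInv T β a b → BF T β k a b := by
  intro β
  induction β using Ordinal.induction with
  | h β ih =>
    intro k a b haG hbG hInv
    by_cases hβ : β = 0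
    · subst hβ
      rw [BF_zero]
      exact pairs_to_eqQF hInv.1 hInv.2.1
    · rw [BF_ne hβ]
      intro γ hγ
      constructor
      · intro c hc
        obtain ⟨d, hdG, hInv'⟩ := ext_construct hT hγ haG hbG hInv c hc
        exact ⟨d, hdG, ih γ hγ (k + 1) _ _ (snoc_Gset haG hc) (snoc_Gset hbG hdG) hInv'⟩
      · intro d hd
        obtain ⟨c, hcG, hInv'⟩ := ext_construct hT hγ hbG haG (BFInv_symm hInv) d hd
        exact ⟨c, hcG, ih γ hγ (k + 1) _ _ (snoc_Gset haG hcG) (snoc_Gset hbG hd)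
          (BFInv_symm hInv')⟩

theorem stmt_15 (T : Set (List ℕ)) (hT : IsTree T) (n : ℕ) (a : Finset (List ℕ))
    (ha : ((n, a) : GP) ∈ Gset T) (β : Ordinal) :
    BF T β 1 ![((n, a) : GP)] ![((n, ∅) : GP)] ↔
      RankGE (Gsucc T) (Ordinal.omega0 * β) (n, a) := by
  have haG : ∀ i : Fin 1, (![((n, a) : GP)]) i ∈ Gset T := by
    intro i; fin_cases i; simpa using ha
  have hbG : ∀ i : Fin 1, (![((n, ∅) : GP)]) i ∈ Gset T := by
    intro i; fin_cases i; simpa using Gset_empty T n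
  constructor
  · intro h
    have hInv := BF_to_BFInv hT β 1 _ _ haG hbG h
    have hr := hInv.2.2 0
    have hr' : RankGE (Gsucc T) (Ordinal.omega0 * β)
        ((n, a ∆ (⊥ : Finset (List ℕ))) : GP) := hr
    rwa [symmDiff_bot] at hr'
  · intro h
    apply BFInv_to_BF hT β 1 _ _ haG hbG
    refine ⟨fun i => by fin_cases i; rfl, fun i j => by
      fin_cases i; fin_cases j
      rw [symmDiff_self, symmDiff_self], fun i => by
      fin_cases i
      have hgoal : RankGE (Gsucc T) (Ordinal.omega0 * β)
          ((n, a ∆ (⊥ : Finset (List ℕ))) : GP) := by rwa [symmDiff_bot]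
      exact hgoal⟩
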